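/- The class of languages accepted by priority multicounter machines is closed under language substitutions: if A is a priority k-counter machine and σ assigns to each input letter x a language σ(x) accepted by a priority ℓ-counter machine, then σ(L(A)) is accepted by a priority (ℓ+k)-counter machine. -/

import Mathlib

/-- Languages over the universal alphabet `ℕ`. -/
abbrev Lang := Set (List ℕ)
/-- An edge of a priority `k`-counter machine: source and target states, an
input word, a priority `ℓ ∈ {0, …, k}` (the transition fires only if counters
`1, …, ℓ` are all zero) and a vector added to the counters. -/
structure PEdge (Q : Type) (k : ℕ) where
  src : Q
  word : List ℕ
  prio : ℕ
  add : Fin k → ℤ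
  tgt : Q

/-- A priority `k`-counter machine. -/
structure PCM (k : ℕ) where
  Q : Type
  [fin : Fintype Q]
  edges : List (PEdge Q k)
  prioLe : ∀ e ∈ edges, e.prio ≤ k
  init : Q
  final : Q → Prop

/-- Reachability: `Reach A q μ w` iff from the initial configuration (initial
state, all counters zero) the machine can reach state `q` with counter values
`μ`, reading input `w`; counters stay nonnegative throughout, and a transition
of priority `ℓ` fires only if counters `1, …, ℓ` are zero. -/
inductive PCM.Reach {k : ℕ} (A : PCM k) : A.Q → (Fin k → ℕ) → List ℕ → Prop
  | refl : PCM.Reach A A.init (fun _ => 0) []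
  | step {q : A.Q} {μ : Fin k → ℕ} {w : List ℕ} (e : PEdge A.Q k)
      (he : e ∈ A.edges) (hsrc : e.src = q)
      (hzero : ∀ i : Fin k, (i : ℕ) < e.prio → μ i = 0)
      (μ' : Fin k → ℕ) (hupd : ∀ i : Fin k, (μ' i : ℤ) = (μ i : ℤ) + e.add i)
      (h : PCM.Reach A q μ w) :
      PCM.Reach A e.tgt μ' (w ++ e.word)

/-- The language of a priority counter machine: acceptance by final state with
all counters zero. -/
def PCM.lang {k : ℕ} (A : PCM k) : Lang :=
  {w | ∃ q, A.final q ∧ PCM.Reach A q (fun _ => 0) w}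
/-- `substWord σ u w`: `w` is obtained from `u` by replacing each letter `a` by
some word of `σ a`. -/
def substWord (σ : ℕ → Lang) (u w : List ℕ) : Prop :=
  ∃ ws : List (List ℕ), List.Forall₂ (fun a v => v ∈ σ a) u ws ∧ w = ws.flatten

/-- Application of a substitution to a language. -/
def substLang (σ : ℕ → Lang) (L : Lang) : Lang := {w | ∃ u ∈ L, substWord σ u w}

attribute [instance] PCM.fin

namespace PrioSub

/-- Generic multi-step relation between arbitrary configurations. -/
inductive Steps {m : ℕ} (M : PCM m) : M.Q → (Fin m → ℕ) → M.Q → (Fin m → ℕ) → List ℕ → Prop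
  | refl (q : M.Q) (μ : Fin m → ℕ) : Steps M q μ q μ []
  | step {q₀ : M.Q} {μ₀ : Fin m → ℕ} {q : M.Q} {μ : Fin m → ℕ} {w : List ℕ}
      (e : PEdge M.Q m) (he : e ∈ M.edges) (hsrc : e.src = q)
      (hzero : ∀ i : Fin m, (i : ℕ) < e.prio → μ i = 0)
      (μ' : Fin m → ℕ) (hupd : ∀ i : Fin m, (μ' i : ℤ) = (μ i : ℤ) + e.add i)
      (h : Steps M q₀ μ₀ q μ w) : Steps M q₀ μ₀ e.tgt μ' (w ++ e.word)

theorem Steps.trans {m : ℕ} {M : PCM m} {a b c : M.Q} {α β γ : Fin m → ℕ} {w w' : List ℕ}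
    (h1 : Steps M a α b β w) (h2 : Steps M b β c γ w') : Steps M a α c γ (w ++ w') := by
  induction h2 with
  | refl => simpa using h1
  | step e he hsrc hzero μ' hupd h ih =>
      rw [← List.append_assoc]
      exact Steps.step e he hsrc hzero μ' hupd ih

theorem reach_iff_steps {m : ℕ} {M : PCM m} {q : M.Q} {μ : Fin m → ℕ} {w : List ℕ} :
    M.Reach q μ w ↔ Steps M M.init (fun _ => 0) q μ w := by
  constructor
  · intro h
    induction h with
    | refl => exact Steps.refl _ _
    | step e he hsrc hzero μ' hupd h ih => exact Steps.step e he hsrc hzero μ' hupd ih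
  · intro h
    induction h with
    | refl => exact PCM.Reach.refl
    | step e he hsrc hzero μ' hupd h ih => exact PCM.Reach.step e he hsrc hzero μ' hupd ih

section Constr

variable {k ℓ : ℕ} (A : PCM k) (B : ℕ → PCM ℓ)

/-- State space of the substitution machine. -/
def St : Type :=
  A.Q ⊕ Σ (j : Fin A.edges.length) (i : Fin (A.edges.get j).word.length),
    (B ((A.edges.get j).word.get i)).Q

noncomputable instance : Fintype (St A B) := by
  unfold St; exact Fintype.ofFinite _

def lo (μ : Fin (ℓ + k) → ℕ) : Fin ℓ → ℕ := fun i => μ (Fin.castAdd k i)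
def hi (μ : Fin (ℓ + k) → ℕ) : Fin k → ℕ := fun i => μ (Fin.natAdd ℓ i)

noncomputable def finals (M : PCM ℓ) : List M.Q :=
  letI := Classical.decPred M.final
  ((@Finset.univ _ M.fin).filter (fun q => M.final q)).toList

theorem mem_finals {M : PCM ℓ} {q : M.Q} : q ∈ finals M ↔ M.final q := by
  classical simp [finals]

def startEdges (j : Fin A.edges.length) : List (PEdge (St A B) (ℓ + k)) :=
  if h : 0 < (A.edges.get j).word.length then
    [⟨.inl (A.edges.get j).src, [], ℓ + (A.edges.get j).prio,
      Fin.append (fun _ => 0) (A.edges.get j).add,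
      .inr ⟨j, ⟨0, h⟩, (B ((A.edges.get j).word.get ⟨0, h⟩)).init⟩⟩]
  else
    [⟨.inl (A.edges.get j).src, [], ℓ + (A.edges.get j).prio,
      Fin.append (fun _ => 0) (A.edges.get j).add, .inl (A.edges.get j).tgt⟩]

def simEdges (j : Fin A.edges.length) : List (PEdge (St A B) (ℓ + k)) :=
  (List.finRange (A.edges.get j).word.length).flatMap fun i =>
    (B ((A.edges.get j).word.get i)).edges.map fun f =>
      ⟨.inr ⟨j, i, f.src⟩, f.word, f.prio, Fin.append f.add (fun _ => 0), .inr ⟨j, i, f.tgt⟩⟩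

def nextSt (j : Fin A.edges.length) (i : Fin (A.edges.get j).word.length) : St A B :=
  if h : (i : ℕ) + 1 < (A.edges.get j).word.length then
    .inr ⟨j, ⟨(i : ℕ) + 1, h⟩, (B ((A.edges.get j).word.get ⟨(i : ℕ) + 1, h⟩)).init⟩
  else .inl (A.edges.get j).tgt

noncomputable def advEdges (j : Fin A.edges.length) : List (PEdge (St A B) (ℓ + k)) :=
  (List.finRange (A.edges.get j).word.length).flatMap fun i =>
    (finals (B ((A.edges.get j).word.get i))).map fun q =>
      ⟨.inr ⟨j, i, q⟩, [], ℓ, fun _ => 0, nextSt A B j i⟩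

noncomputable def Cedges : List (PEdge (St A B) (ℓ + k)) :=
  (List.finRange A.edges.length).flatMap fun j =>
    startEdges A B j ++ simEdges A B j ++ advEdges A B j

theorem mem_Cedges {e' : PEdge (St A B) (ℓ + k)} :
    e' ∈ Cedges A B ↔ ∃ j, e' ∈ startEdges A B j ∨ e' ∈ simEdges A B j ∨ e' ∈ advEdges A B j := by
  simp [Cedges, or_assoc]

noncomputable def C : PCM (ℓ + k) where
  Q := St A B
  edges := Cedges A B
  prioLe := by
    intro e' he'
    rw [mem_Cedges] at he'
    obtain ⟨j, h | h | h⟩ := he'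
    · have hp : (A.edges.get j).prio ≤ k := A.prioLe _ (A.edges.get_mem ..)
      unfold startEdges at h
      split at h <;> simp_all <;> omega
    · simp only [simEdges, List.mem_flatMap, List.mem_map, List.mem_finRange] at h
      obtain ⟨i, f, hf, he⟩ := h
      have := (B _).prioLe hf he.1
      rw [← he.2]; simp; omega
    · simp only [advEdges, List.mem_flatMap, List.mem_map, List.mem_finRange] at h
      obtain ⟨i, f, hf, he⟩ := h
      rw [← he.2]; simp
  init := .inl A.init
  final := fun s => ∃ q, A.final q ∧ s = .inl q

theorem append_lt {α : Type} (a : Fin ℓ → α) (b : Fin k → α) (i : Fin (ℓ + k))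
    (h : (i : ℕ) < ℓ) : Fin.append a b i = a ⟨i, h⟩ := by
  have : i = Fin.castAdd k ⟨i, h⟩ := Fin.ext rfl
  conv_lhs => rw [this]
  exact Fin.append_left a b _

theorem append_ge {α : Type} (a : Fin ℓ → α) (b : Fin k → α) (i : Fin (ℓ + k))
    (h : ℓ ≤ (i : ℕ)) : Fin.append a b i = b ⟨(i : ℕ) - ℓ, by omega⟩ := by
  have : i = Fin.natAdd ℓ ⟨(i : ℕ) - ℓ, by omega⟩ := Fin.ext (by simp; omega)
  conv_lhs => rw [this]
  exact Fin.append_right a b _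

theorem zero_append_zero : Fin.append (fun _ => (0:ℕ)) (fun _ => (0:ℕ)) = (fun _ : Fin (ℓ+k) => 0) := by
  funext i
  rcases lt_or_ge (i : ℕ) ℓ with h | h
  · rw [append_lt _ _ _ h]
  · rw [append_ge _ _ _ h]

theorem mem_C_start {j : Fin A.edges.length} {x} (hx : x ∈ startEdges A B j) :
    x ∈ (C A B).edges := (mem_Cedges A B).2 ⟨j, Or.inl hx⟩

theorem mem_C_sim {j : Fin A.edges.length} {x} (hx : x ∈ simEdges A B j) :
    x ∈ (C A B).edges := (mem_Cedges A B).2 ⟨j, Or.inr (Or.inl hx)⟩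

theorem mem_C_adv {j : Fin A.edges.length} {x} (hx : x ∈ advEdges A B j) :
    x ∈ (C A B).edges := (mem_Cedges A B).2 ⟨j, Or.inr (Or.inr hx)⟩

theorem simB (j : Fin A.edges.length) (i : Fin (A.edges.get j).word.length)
    {q : (B ((A.edges.get j).word.get i)).Q} {μ : Fin ℓ → ℕ} {w : List ℕ}
    (h : (B ((A.edges.get j).word.get i)).Reach q μ w) (ν : Fin k → ℕ) :
    Steps (C A B) (Sum.inr ⟨j, i, (B ((A.edges.get j).word.get i)).init⟩ : St A B)
      (Fin.append (fun _ => 0) ν) (Sum.inr ⟨j, i, q⟩ : St A B) (Fin.append μ ν) w := by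
  induction h with
  | refl => exact Steps.refl _ _
  | @step p ρ v f hf hsrc hzero μ' hupd h ih =>
      cases hsrc
      refine Steps.step (μ := Fin.append ρ ν)
        (e := (⟨(Sum.inr ⟨j, i, f.src⟩ : St A B), f.word, f.prio, Fin.append f.add (fun _ => 0),
            (Sum.inr ⟨j, i, f.tgt⟩ : St A B)⟩ : PEdge (C A B).Q (ℓ + k)))
        ?_ rfl ?_ _ ?_ ?_
      · exact mem_C_sim A B (by
          simp only [simEdges, List.mem_flatMap, List.mem_map, List.mem_finRange]
          exact List.mem_flatMap.2 ⟨i, List.mem_finRange _, List.mem_map.2 ⟨f, hf, rfl⟩⟩)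
      · intro i' hi'
        have hfp : f.prio ≤ ℓ := (B _).prioLe f hf
        have hl : (i' : ℕ) < ℓ := lt_of_lt_of_le hi' hfp
        rw [append_lt _ _ _ hl]
        exact hzero _ hi'
      · intro i'
        dsimp only
        rcases lt_or_ge (i' : ℕ) ℓ with hl | hl
        · rw [append_lt _ _ _ hl, append_lt _ _ _ hl, append_lt _ _ _ hl]
          exact hupd _
        · rw [append_ge _ _ _ hl, append_ge _ _ _ hl, append_ge _ _ _ hl]
          simp
      · exact ih

theorem forall₂_append_split {α β : Type*} {R : α → β → Prop} {l₁ l₂ : List α} {l : List β}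
    (h : List.Forall₂ R (l₁ ++ l₂) l) :
    ∃ m₁ m₂, l = m₁ ++ m₂ ∧ List.Forall₂ R l₁ m₁ ∧ List.Forall₂ R l₂ m₂ := by
  induction l₁ generalizing l with
  | nil => exact ⟨[], l, rfl, List.Forall₂.nil, h⟩
  | cons a t ih =>
      cases h with
      | cons hab h' =>
          obtain ⟨m₁, m₂, rfl, h1, h2⟩ := ih h'
          exact ⟨_ :: m₁, m₂, rfl, List.Forall₂.cons hab h1, h2⟩

theorem advStep (j : Fin A.edges.length) (i : Fin (A.edges.get j).word.length)
    {qf : (B ((A.edges.get j).word.get i)).Q} (hqf : (B ((A.edges.get j).word.get i)).final qf)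
    (ν : Fin k → ℕ) :
    Steps (C A B) (Sum.inr ⟨j, i, qf⟩ : St A B) (Fin.append (fun _ => 0) ν)
      (nextSt A B j i) (Fin.append (fun _ => 0) ν) [] := by
  refine Steps.step
    (e := (⟨(Sum.inr ⟨j, i, qf⟩ : St A B), [], ℓ, fun _ => 0, nextSt A B j i⟩ :
      PEdge (C A B).Q (ℓ + k))) ?_ rfl ?_ _ ?_ (Steps.refl _ _)
  · refine mem_C_adv A B (j := j) ?_
    simp only [advEdges, List.mem_flatMap, List.mem_map, List.mem_finRange]
    exact List.mem_flatMap.2 ⟨i, List.mem_finRange _, List.mem_map.2 ⟨qf, mem_finals.2 hqf, rfl⟩⟩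
  · intro i' hi'
    rw [append_lt _ _ _ hi']
  · intro i'; simp

theorem simFrom (j : Fin A.edges.length) (ws : List (List ℕ)) :
    ∀ (i : Fin (A.edges.get j).word.length),
      List.Forall₂ (fun a v => v ∈ (B a).lang) ((A.edges.get j).word.drop i) ws →
      ∀ ν : Fin k → ℕ,
      Steps (C A B) (Sum.inr ⟨j, i, (B ((A.edges.get j).word.get i)).init⟩ : St A B)
        (Fin.append (fun _ => 0) ν) (Sum.inl (A.edges.get j).tgt : St A B)
        (Fin.append (fun _ => 0) ν) ws.flatten := by
  induction ws with
  | nil =>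
      intro i h ν
      exfalso
      have := List.forall₂_nil_right_iff.1 h
      have hlen := congrArg List.length this
      simp at hlen
      omega
  | cons v ws ih =>
      intro i h ν
      have hdrop : (A.edges.get j).word.drop i
          = (A.edges.get j).word.get i :: (A.edges.get j).word.drop ((i : ℕ) + 1) := by
        rw [List.drop_eq_getElem_cons i.isLt]
        simp [List.get_eq_getElem]
      rw [hdrop] at h
      rcases List.forall₂_cons.mp h with ⟨hv, hrest⟩
      obtain ⟨qf, hqf, hreach⟩ := hv
      have S1 := simB A B j i hreach ν
      have S2 := advStep A B j i hqf ν
      by_cases h1 : (i : ℕ) + 1 < (A.edges.get j).word.length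
      · have hnext : nextSt A B j i
            = (Sum.inr ⟨j, ⟨(i : ℕ) + 1, h1⟩,
                (B ((A.edges.get j).word.get ⟨(i : ℕ) + 1, h1⟩)).init⟩ : St A B) := by
          rw [nextSt]; exact dif_pos h1
        rw [hnext] at S2
        have S3 := ih ⟨(i : ℕ) + 1, h1⟩ hrest ν
        have := S1.trans (S2.trans S3)
        simpa using this
      · have hnext : nextSt A B j i = (Sum.inl (A.edges.get j).tgt : St A B) := by
          rw [nextSt]; exact dif_neg h1
        rw [hnext] at S2
        have hws : ws = [] := by
          have hd : (A.edges.get j).word.drop ((i : ℕ) + 1) = [] := by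
            apply List.drop_eq_nil_of_le; omega
          rw [hd] at hrest
          exact List.forall₂_nil_left_iff.1 hrest
        subst hws
        have := S1.trans S2
        simpa using this

theorem simAstep (j : Fin A.edges.length) {ν ν' : Fin k → ℕ}
    (hz : ∀ i : Fin k, (i : ℕ) < (A.edges.get j).prio → ν i = 0)
    (hu : ∀ i : Fin k, (ν' i : ℤ) = (ν i : ℤ) + (A.edges.get j).add i)
    {wsub : List ℕ} (hs : substWord (fun x => (B x).lang) (A.edges.get j).word wsub) :
    Steps (C A B) (Sum.inl (A.edges.get j).src : St A B) (Fin.append (fun _ => 0) ν)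
      (Sum.inl (A.edges.get j).tgt : St A B) (Fin.append (fun _ => 0) ν') wsub := by
  have hzc : ∀ i' : Fin (ℓ + k), (i' : ℕ) < ℓ + (A.edges.get j).prio →
      Fin.append (fun _ => (0:ℕ)) ν i' = 0 := by
    intro i' hi'
    rcases lt_or_ge (i' : ℕ) ℓ with hl | hl
    · rw [append_lt _ _ _ hl]
    · rw [append_ge _ _ _ hl]
      exact hz ⟨(i' : ℕ) - ℓ, by omega⟩ (show (i' : ℕ) - ℓ < _ by omega)
  have huc : ∀ i' : Fin (ℓ + k),
      ((Fin.append (fun _ => (0:ℕ)) ν' i' : ℕ) : ℤ)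
        = ((Fin.append (fun _ => (0:ℕ)) ν i' : ℕ) : ℤ)
          + Fin.append (fun _ => (0:ℤ)) (A.edges.get j).add i' := by
    intro i'
    rcases lt_or_ge (i' : ℕ) ℓ with hl | hl
    · rw [append_lt (fun _ => (0:ℕ)) ν' i' hl, append_lt (fun _ => (0:ℕ)) ν i' hl,
        append_lt (fun _ => (0:ℤ)) (A.edges.get j).add i' hl]
      simp
    · rw [append_ge (fun _ => (0:ℕ)) ν' i' hl, append_ge (fun _ => (0:ℕ)) ν i' hl,
        append_ge (fun _ => (0:ℤ)) (A.edges.get j).add i' hl]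
      exact hu _
  obtain ⟨ws, hf2, rfl⟩ := hs
  by_cases h0 : 0 < (A.edges.get j).word.length
  · have S0 : Steps (C A B) (Sum.inl (A.edges.get j).src : St A B)
        (Fin.append (fun _ => 0) ν)
        (Sum.inr ⟨j, ⟨0, h0⟩, (B ((A.edges.get j).word.get ⟨0, h0⟩)).init⟩ : St A B)
        (Fin.append (fun _ => 0) ν') [] := by
      refine Steps.step
        (e := (⟨(Sum.inl (A.edges.get j).src : St A B), [], ℓ + (A.edges.get j).prio,
          Fin.append (fun _ => 0) (A.edges.get j).add,
          (Sum.inr ⟨j, ⟨0, h0⟩, (B ((A.edges.get j).word.get ⟨0, h0⟩)).init⟩ : St A B)⟩ :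
          PEdge (C A B).Q (ℓ + k))) ?_ rfl hzc _ huc (Steps.refl _ _)
      exact mem_C_start A B (by rw [startEdges, dif_pos h0]; exact List.mem_singleton_self _)
    have hws : List.Forall₂ (fun a v => v ∈ (B a).lang)
        ((A.edges.get j).word.drop ((⟨0, h0⟩ : Fin _) : ℕ)) ws := by simpa using hf2
    have S1 := simFrom A B j ws ⟨0, h0⟩ hws ν'
    simpa using S0.trans S1
  · have hempty : (A.edges.get j).word = [] := List.eq_nil_of_length_eq_zero (by omega)
    rw [hempty] at hf2
    have hws : ws = [] := List.forall₂_nil_left_iff.1 hf2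
    subst hws
    have S0 : Steps (C A B) (Sum.inl (A.edges.get j).src : St A B)
        (Fin.append (fun _ => 0) ν)
        (Sum.inl (A.edges.get j).tgt : St A B)
        (Fin.append (fun _ => 0) ν') [] := by
      refine Steps.step
        (e := (⟨(Sum.inl (A.edges.get j).src : St A B), [], ℓ + (A.edges.get j).prio,
          Fin.append (fun _ => 0) (A.edges.get j).add,
          (Sum.inl (A.edges.get j).tgt : St A B)⟩ :
          PEdge (C A B).Q (ℓ + k))) ?_ rfl hzc _ huc (Steps.refl _ _)
      refine mem_C_start A B (j := j) ?_
      rw [startEdges, dif_neg (by omega)]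
      exact List.mem_singleton_self _
    simpa using S0

theorem fwd {q : A.Q} {ν : Fin k → ℕ} {u : List ℕ} (h : A.Reach q ν u) :
    ∀ w, substWord (fun x => (B x).lang) u w →
    Steps (C A B) (Sum.inl A.init : St A B) (fun _ => 0) (Sum.inl q : St A B)
      (Fin.append (fun _ => 0) ν) w := by
  induction h with
  | refl =>
      intro w hw
      obtain ⟨ws, h1, rfl⟩ := hw
      have hws : ws = [] := List.forall₂_nil_left_iff.1 h1
      subst hws
      rw [zero_append_zero]
      exact Steps.refl _ _
  | step e he hsrc hzero μ' hupd h ih =>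
      intro w hw
      cases hsrc
      obtain ⟨ws, hf2, rfl⟩ := hw
      obtain ⟨m₁, m₂, rfl, h1, h2⟩ := forall₂_append_split hf2
      obtain ⟨j, hj⟩ := List.get_of_mem he
      have S1 := ih m₁.flatten ⟨m₁, h1, rfl⟩
      have S2 := simAstep A B j (ν := _) (ν' := μ') (by rw [hj]; exact hzero)
        (by rw [hj]; exact hupd) (wsub := m₂.flatten) ⟨m₂, by rw [hj]; exact h2, rfl⟩
      rw [hj] at S2
      have := S1.trans S2
      simpa using this

/-- Invariant for the backward direction. -/
def Inv : St A B → (Fin (ℓ + k) → ℕ) → List ℕ → Prop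
  | Sum.inl q, μ, w =>
      (∀ i : Fin ℓ, lo μ i = 0) ∧
      ∃ u, A.Reach q (hi μ) u ∧ substWord (fun x => (B x).lang) u w
  | Sum.inr ⟨j, i, p⟩, μ, w =>
      ∃ (u wu : List ℕ) (ν : Fin k → ℕ) (ws : List (List ℕ)) (w2 : List ℕ),
        A.Reach (A.edges.get j).src ν u ∧
        substWord (fun x => (B x).lang) u wu ∧
        (∀ i' : Fin k, (i' : ℕ) < (A.edges.get j).prio → ν i' = 0) ∧
        (∀ i' : Fin k, ((hi μ i' : ℕ) : ℤ) = (ν i' : ℤ) + (A.edges.get j).add i') ∧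
        List.Forall₂ (fun a v => v ∈ (B a).lang) ((A.edges.get j).word.take i) ws ∧
        (B ((A.edges.get j).word.get i)).Reach p (lo μ) w2 ∧
        w = wu ++ ws.flatten ++ w2

theorem lo_upd {μ μ' : Fin (ℓ + k) → ℕ} {a : Fin ℓ → ℤ} {b : Fin k → ℤ}
    (hupd : ∀ i', ((μ' i' : ℕ) : ℤ) = (μ i' : ℤ) + Fin.append a b i') :
    ∀ i : Fin ℓ, ((lo μ' i : ℕ) : ℤ) = (lo μ i : ℤ) + a i := by
  intro i
  have := hupd (Fin.castAdd k i)
  rwa [Fin.append_left] at this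

theorem hi_upd {μ μ' : Fin (ℓ + k) → ℕ} {a : Fin ℓ → ℤ} {b : Fin k → ℤ}
    (hupd : ∀ i', ((μ' i' : ℕ) : ℤ) = (μ i' : ℤ) + Fin.append a b i') :
    ∀ i : Fin k, ((hi μ' i : ℕ) : ℤ) = (hi μ i : ℤ) + b i := by
  intro i
  have := hupd (Fin.natAdd ℓ i)
  rwa [Fin.append_right] at this

theorem lo_upd_zero {μ μ' : Fin (ℓ + k) → ℕ} {b : Fin k → ℤ}
    (hupd : ∀ i', ((μ' i' : ℕ) : ℤ) = (μ i' : ℤ) + Fin.append (fun _ => (0:ℤ)) b i') :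
    lo μ' = lo μ := by
  funext i
  have := lo_upd (k := k) (ℓ := ℓ) hupd i
  exact_mod_cast this

theorem hi_upd_zero {μ μ' : Fin (ℓ + k) → ℕ} {a : Fin ℓ → ℤ}
    (hupd : ∀ i', ((μ' i' : ℕ) : ℤ) = (μ i' : ℤ) + Fin.append a (fun _ => (0:ℤ)) i') :
    hi μ' = hi μ := by
  funext i
  have := hi_upd (k := k) (ℓ := ℓ) hupd i
  exact_mod_cast this

theorem upd_zero {μ μ' : Fin (ℓ + k) → ℕ}
    (hupd : ∀ i', ((μ' i' : ℕ) : ℤ) = (μ i' : ℤ) + (fun _ => (0:ℤ)) i') :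
    μ' = μ := by
  funext i
  have := hupd i
  simp at this
  exact_mod_cast this

theorem bwd {s : (C A B).Q} {μ : Fin (ℓ + k) → ℕ} {w : List ℕ}
    (h : (C A B).Reach s μ w) : Inv A B s μ w := by
  induction h with
  | refl =>
      refine ⟨fun i => rfl, [], PCM.Reach.refl, [], List.Forall₂.nil, rfl⟩
  | @step q μ w e' he' hsrc hzero μ' hupd h ih =>
      obtain ⟨j, hS | hS | hS⟩ := (mem_Cedges A B).1 he'
      · -- start edges
        simp only [startEdges] at hS
        split at hS
        case isTrue h0 =>
          replace hS : e' = _ := List.mem_singleton.1 hS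
          subst hS
          cases hsrc
          dsimp only at hzero hupd ⊢
          obtain ⟨hlo, u, hre, hsub⟩ := ih
          have hν : ∀ i' : Fin k, (i' : ℕ) < (A.edges.get j).prio → hi μ i' = 0 := by
            intro i' hi'
            exact hzero (Fin.natAdd ℓ i')
              (by simp only [List.get_eq_getElem, Fin.coe_natAdd] at hi' ⊢; omega)
          have hμ'lo : lo μ' = lo μ := lo_upd_zero hupd
          have hlo0 : lo μ = fun _ => 0 := funext hlo
          refine ⟨u, w, hi μ, [], [], hre, hsub, hν, hi_upd hupd, List.Forall₂.nil, ?_, by simp⟩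
          rw [hμ'lo, hlo0]
          exact PCM.Reach.refl
        case isFalse h0 =>
          replace hS : e' = _ := List.mem_singleton.1 hS
          subst hS
          cases hsrc
          dsimp only at hzero hupd ⊢
          obtain ⟨hlo, u, hre, hsub⟩ := ih
          have hword : (A.edges.get j).word = [] := List.eq_nil_of_length_eq_zero (by omega)
          refine ⟨?_, u ++ (A.edges.get j).word, ?_, ?_⟩
          · intro i
            have := lo_upd_zero hupd
            rw [this]; exact hlo i
          · refine PCM.Reach.step (A.edges.get j) (A.edges.get_mem ..) rfl ?_ _ (hi_upd hupd) hre
            intro i' hi'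
            exact hzero (Fin.natAdd ℓ i')
              (by simp only [List.get_eq_getElem, Fin.coe_natAdd] at hi' ⊢; omega)
          · rw [hword]
            obtain ⟨wsu, hwsu, rfl⟩ := hsub
            exact ⟨wsu, by simpa using hwsu, by simp⟩
      · -- simulation edges
        simp only [simEdges, List.mem_flatMap, List.mem_map, List.mem_finRange] at hS
        obtain ⟨i, -, hS⟩ := List.mem_flatMap.1 hS
        obtain ⟨f, hf, hS⟩ := List.mem_map.1 hS
        subst hS
        cases hsrc
        dsimp only at hzero hupd ⊢
        obtain ⟨u, wu, ν, ws, w2, h1, h2, h3, h4, h5, h6, h7⟩ := ih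
        refine ⟨u, wu, ν, ws, w2 ++ f.word, h1, h2, h3, ?_, h5, ?_, ?_⟩
        · intro i'
          rw [show hi μ' = hi μ from hi_upd_zero hupd]
          exact h4 i'
        · refine PCM.Reach.step f hf rfl ?_ _ (lo_upd hupd) h6
          intro i'' hi''
          have : ((Fin.castAdd k i'' : Fin (ℓ + k)) : ℕ) < f.prio := hi''
          exact hzero _ this
        · subst h7; simp
      · -- advance edges
        simp only [advEdges, List.mem_flatMap, List.mem_map, List.mem_finRange] at hS
        obtain ⟨i, -, hS⟩ := List.mem_flatMap.1 hS
        obtain ⟨qf, hqf, hS⟩ := List.mem_map.1 hS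
        subst hS
        cases hsrc
        dsimp only at hzero hupd ⊢
        obtain ⟨u, wu, ν, ws, w2, h1, h2, h3, h4, h5, h6, h7⟩ := ih
        have hμ' : μ' = μ := upd_zero hupd
        rw [hμ']
        have hlo0 : lo μ = fun _ => 0 := by
          funext i'
          exact hzero (Fin.castAdd k i') i'.isLt
        rw [hlo0] at h6
        have hw2 : w2 ∈ (B ((A.edges.get j).word.get i)).lang :=
          ⟨qf, mem_finals.1 hqf, h6⟩
        have htake : (A.edges.get j).word.take ((i : ℕ) + 1) =
            (A.edges.get j).word.take i ++ [(A.edges.get j).word.get i] := by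
          rw [← List.take_concat_get' _ _ i.isLt]
          simp [List.get_eq_getElem]
        have hws' : List.Forall₂ (fun a v => v ∈ (B a).lang)
            ((A.edges.get j).word.take ((i : ℕ) + 1)) (ws ++ [w2]) := by
          rw [htake]
          exact List.rel_append h5 (List.forall₂_cons.2 ⟨hw2, List.Forall₂.nil⟩)
        refine dite ((i : ℕ) + 1 < (A.edges.get j).word.length) (fun _ => ?isTrue) (fun _ => ?isFalse)
        case isTrue h1' =>
          rw [show nextSt A B j i = (Sum.inr ⟨j, ⟨(i : ℕ) + 1, h1'⟩,
            (B ((A.edges.get j).word.get ⟨(i : ℕ) + 1, h1'⟩)).init⟩ : St A B) by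
              rw [nextSt]; exact dif_pos h1']
          refine ⟨u, wu, ν, ws ++ [w2], [], h1, h2, h3, h4, hws', ?_, ?_⟩
          · rw [hlo0]; exact PCM.Reach.refl
          · subst h7; simp
        case isFalse h1' =>
          rw [show nextSt A B j i = (Sum.inl (A.edges.get j).tgt : St A B) by
            rw [nextSt]; exact dif_neg h1']
          have htakeall : (A.edges.get j).word.take ((i : ℕ) + 1) = (A.edges.get j).word :=
            List.take_of_length_le (by omega)
          rw [htakeall] at hws'
          refine ⟨?_, u ++ (A.edges.get j).word, ?_, ?_⟩
          · intro i'
            rw [hlo0]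
          · exact PCM.Reach.step (A.edges.get j) (A.edges.get_mem ..) rfl h3 _ h4 h1
          · obtain ⟨wsu, hwsu, rfl⟩ := h2
            refine ⟨wsu ++ (ws ++ [w2]), List.rel_append hwsu hws', ?_⟩
            subst h7; simp

theorem C_lang : (C A B).lang = substLang (fun x => (B x).lang) A.lang := by
  ext w
  constructor
  · rintro ⟨s, ⟨qf, hqf, rfl⟩, hre⟩
    have hinv := bwd A B hre
    obtain ⟨-, u, hu, hsub⟩ := hinv
    exact ⟨u, ⟨qf, hqf, hu⟩, hsub⟩
  · rintro ⟨u, ⟨qf, hqf, hre⟩, hsub⟩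
    have S := fwd A B hre w hsub
    rw [zero_append_zero] at S
    exact ⟨Sum.inl qf, ⟨qf, hqf, rfl⟩, reach_iff_steps.2 S⟩

end Constr

end PrioSub

/-- The priority multicounter languages are closed under
substitution: if `A` is a priority `k`-counter machine and `σ` assigns to each
letter a language of a priority `ℓ`-counter machine, then `σ(L(A))` is the
language of a priority `(ℓ+k)`-counter machine. -/
theorem prio_closed_under_substitution (k ℓ : ℕ) (A : PCM k)
    (σ : ℕ → Lang) (hσ : ∀ x : ℕ, ∃ B : PCM ℓ, σ x = B.lang) :
    ∃ C : PCM (ℓ + k), C.lang = substLang σ A.lang := by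
  choose Bf hB using hσ
  have hσeq : σ = fun x => (Bf x).lang := funext hB
  exact ⟨PrioSub.C A Bf, by rw [PrioSub.C_lang A Bf, hσeq]⟩
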